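/- arXiv:1501.04610 — 4 statements merged into one kernel-verified Lean document; each statement's English description precedes it below -/
import Mathlib

section
/- Let a, b, c, d be real numbers with ad − bc = 1 and let φ(x) = (ax + b)/(cx + d). Suppose there exist three distinct rational numbers q₁, q₂, q₃ with c·qᵢ + d ≠ 0 for each i such that φ(qᵢ) is rational for each i. Then (i) there exists a nonzero real number λ such that λa, λb, λc, λd are all rational, and (ii) for every rational number q with cq + d ≠ 0 the value φ(q) is rational, while for every irrational real number x with cx + d ≠ 0 the value φ(x) is irrational. -/
/-- Möbius transformation with determinant 1 taking three distinct rationals to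
rationals: the coefficients are rational up to a common nonzero scalar, the map
takes rationals to rationals and irrationals to irrationals. -/
theorem mobius_three_rationals (a b c d : ℝ) (hdet : a * d - b * c = 1)
    (q₁ q₂ q₃ : ℚ) (h12 : q₁ ≠ q₂) (h13 : q₁ ≠ q₃) (h23 : q₂ ≠ q₃)
    (hd1 : c * q₁ + d ≠ 0) (hd2 : c * q₂ + d ≠ 0) (hd3 : c * q₃ + d ≠ 0)
    (hr1 : ∃ r : ℚ, (a * q₁ + b) / (c * q₁ + d) = r)
    (hr2 : ∃ r : ℚ, (a * q₂ + b) / (c * q₂ + d) = r)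
    (hr3 : ∃ r : ℚ, (a * q₃ + b) / (c * q₃ + d) = r) :
    (∃ lam : ℝ, lam ≠ 0 ∧ (∃ ra : ℚ, lam * a = ra) ∧ (∃ rb : ℚ, lam * b = rb) ∧
      (∃ rc : ℚ, lam * c = rc) ∧ (∃ rd : ℚ, lam * d = rd)) ∧
    (∀ q : ℚ, c * q + d ≠ 0 → ∃ r : ℚ, (a * q + b) / (c * q + d) = r) ∧
    (∀ x : ℝ, Irrational x → c * x + d ≠ 0 →
      Irrational ((a * x + b) / (c * x + d))) := by
  obtain ⟨r₁, e₁⟩ := hr1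
  obtain ⟨r₂, e₂⟩ := hr2
  obtain ⟨r₃, e₃⟩ := hr3
  rw [div_eq_iff hd1] at e₁
  rw [div_eq_iff hd2] at e₂
  rw [div_eq_iff hd3] at e₃
  have hq12 : (q₁ : ℝ) - q₂ ≠ 0 := sub_ne_zero.2 (by exact_mod_cast h12)
  have hq13 : (q₁ : ℝ) - q₃ ≠ 0 := sub_ne_zero.2 (by exact_mod_cast h13)
  have hq23 : (q₂ : ℝ) - q₃ ≠ 0 := sub_ne_zero.2 (by exact_mod_cast h23)
  have hq12' : q₁ - q₂ ≠ 0 := sub_ne_zero.2 h12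
  have key : (∃ lam : ℝ, lam ≠ 0 ∧ (∃ ra : ℚ, lam * a = ra) ∧ (∃ rb : ℚ, lam * b = rb) ∧
      (∃ rc : ℚ, lam * c = rc) ∧ (∃ rd : ℚ, lam * d = rd)) := by
    by_cases hc : c = 0
    · subst hc
      have hd : d ≠ 0 := by
        intro h; rw [h] at hdet; simp at hdet
      refine ⟨1/d, one_div_ne_zero hd, ⟨(r₁ - r₂)/(q₁ - q₂), ?_⟩,
        ⟨(r₂*q₁ - r₁*q₂)/(q₁ - q₂), ?_⟩, ⟨0, by simp⟩, ⟨1, by field_simp; norm_num⟩⟩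
      · push_cast
        field_simp
        linear_combination e₁ - e₂
      · push_cast
        field_simp
        linear_combination q₁ * e₂ - q₂ * e₁
    · -- c ≠ 0
      obtain ⟨Q, hQdef⟩ : ∃ Q : ℚ, Q = (r₁ - r₂)*(q₁ - q₃) - (r₁ - r₃)*(q₁ - q₂) := ⟨_, rfl⟩
      obtain ⟨P, hPdef⟩ : ∃ P : ℚ, P = (r₁*q₁ - r₂*q₂)*(q₁ - q₃) - (r₁*q₁ - r₃*q₃)*(q₁ - q₂) :=
        ⟨_, rfl⟩
      have hPQ : c * (P : ℝ) + d * (Q : ℝ) = 0 := by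
        rw [hPdef, hQdef]
        push_cast
        linear_combination -((q₁:ℝ) - q₃) * e₁ + ((q₁:ℝ) - q₃) * e₂
          + ((q₁:ℝ) - q₂) * e₁ - ((q₁:ℝ) - q₂) * e₃
      have I12 : ((r₁ : ℝ) - r₂) * (c * q₁ + d) * (c * q₂ + d) = q₁ - q₂ := by
        linear_combination (-(c * (q₂:ℝ) + d)) * e₁ + (c * (q₁:ℝ) + d) * e₂ + ((q₁:ℝ) - q₂) * hdet
      have I13 : ((r₁ : ℝ) - r₃) * (c * q₁ + d) * (c * q₃ + d) = q₁ - q₃ := by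
        linear_combination (-(c * (q₃:ℝ) + d)) * e₁ + (c * (q₁:ℝ) + d) * e₃ + ((q₁:ℝ) - q₃) * hdet
      have hQR : (Q : ℝ) * ((c*q₁+d) * (c*q₂+d) * (c*q₃+d)) =
          ((q₁:ℝ) - q₂) * ((q₁:ℝ) - q₃) * (c * ((q₃:ℝ) - q₂)) := by
        rw [hQdef]
        push_cast
        linear_combination ((q₁:ℝ) - q₃) * (c * (q₃:ℝ) + d) * I12
          - ((q₁:ℝ) - q₂) * (c * (q₂:ℝ) + d) * I13
      have hQne : (Q : ℝ) ≠ 0 := by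
        intro h
        rw [h, zero_mul] at hQR
        exact (mul_ne_zero (mul_ne_zero hq12 hq13)
          (mul_ne_zero hc (sub_ne_zero.2 (show ((q₃:ℝ)) ≠ q₂ by exact_mod_cast h23.symm))))
          hQR.symm
      have hQne' : Q ≠ 0 := fun h => hQne (by rw [h]; exact Rat.cast_zero)
      refine ⟨1/c, one_div_ne_zero hc, ?_, ?_, ⟨1, by field_simp; norm_num⟩, ⟨(-P)/Q, ?_⟩⟩
      · refine ⟨(Q*(r₁*q₁ - r₂*q₂) - P*(r₁ - r₂))/(Q*(q₁ - q₂)), ?_⟩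
        push_cast
        field_simp
        linear_combination (Q:ℝ) * e₁ - (Q:ℝ) * e₂ + ((r₁:ℝ) - r₂) * hPQ
      · refine ⟨(Q*q₁*q₂*(r₂ - r₁) - P*(q₁*r₂ - q₂*r₁))/(Q*(q₁ - q₂)), ?_⟩
        push_cast
        field_simp
        linear_combination (Q:ℝ) * q₁ * e₂ - (Q:ℝ) * q₂ * e₁ + ((q₁:ℝ)*r₂ - (q₂:ℝ)*r₁) * hPQ
      · push_cast
        field_simp
        linear_combination hPQ
  refine ⟨key, ?_, ?_⟩
  · -- rationals to rationals
    obtain ⟨lam, hlam, ⟨ra, hra⟩, ⟨rb, hrb⟩, ⟨rc, hrc⟩, ⟨rd, hrd⟩⟩ := key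
    intro q hq
    have hden' : ((rc * q + rd : ℚ) : ℝ) = lam * (c * q + d) := by
      push_cast
      linear_combination (q:ℝ) * hrc.symm + hrd.symm
    have hden : (rc * q + rd : ℚ) ≠ 0 := by
      intro h
      rw [h] at hden'
      exact mul_ne_zero hlam hq (by exact_mod_cast hden'.symm)
    refine ⟨(ra * q + rb)/(rc * q + rd), ?_⟩
    push_cast
    rw [div_eq_div_iff hq
      (by exact_mod_cast fun h => hden (by exact_mod_cast h) : ((rc:ℝ) * q + rd) ≠ 0)]
    linear_combination (c * (q:ℝ) + d) * (q:ℝ) * hra + (c * (q:ℝ) + d) * hrb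
      - (a * (q:ℝ) + b) * (q:ℝ) * hrc - (a * (q:ℝ) + b) * hrd
  · -- irrationals to irrationals
    obtain ⟨lam, hlam, ⟨ra, hra⟩, ⟨rb, hrb⟩, ⟨rc, hrc⟩, ⟨rd, hrd⟩⟩ := key
    intro x hx hdx
    rintro ⟨r, hr⟩
    rw [eq_comm, div_eq_iff hdx] at hr
    have hmain : (ra : ℝ) * x + rb = r * ((rc : ℝ) * x + rd) := by
      linear_combination lam * hr + x * hra.symm + hrb.symm - (r:ℝ) * x * hrc.symm - (r:ℝ) * hrd.symm
    by_cases hz : ra - r * rc = 0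
    · have hra' : (ra : ℝ) = r * rc := by exact_mod_cast sub_eq_zero.1 hz
      have hrb' : (rb : ℝ) = r * rd := by
        rw [hra'] at hmain
        linear_combination hmain
      have hdet2 : lam * lam = (ra : ℝ) * rd - rb * rc := by
        linear_combination (-(lam*lam)) * hdet + lam * a * hrd + (rd:ℝ) * hra
          - lam * b * hrc - (rc:ℝ) * hrb
      rw [hra', hrb'] at hdet2
      have hz2 : lam * lam = 0 := by rw [hdet2]; ring
      exact hlam (by nlinarith [hz2])
    · apply hx
      refine ⟨(r * rd - rb)/(ra - r * rc), ?_⟩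
      have hzR : (ra : ℝ) - r * rc ≠ 0 := by
        intro h; exact hz (by exact_mod_cast h)
      push_cast
      rw [div_eq_iff hzR]
      linear_combination -hmain
end

section
/- Let n ≥ 1, R > 0, and λ ≥ 0. There exists a constant C > 0, depending only on n, R and λ, with the following property: for every ε ∈ (0, 1] and every closed convex symmetric set K in n-dimensional Euclidean space with K contained in the closed ball of radius R centered at the origin and with the closed ball of radius ε centered at the origin NOT contained in K, the Lebesgue measure of the closed λε-neighborhood {x : dist(x, K) ≤ λε} of K is at most C·ε. -/
open Metric MeasureTheory Set


lemma box_volume {n : ℕ} (i0 : Fin n) (a b : ℝ) :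
    volume (((MeasurableEquiv.toLp 2 (Fin n → ℝ)).symm) ⁻¹'
      (Set.pi Set.univ (fun i => if i = i0 then Icc (-a) a else Icc (-b) b)))
    = ENNReal.ofReal (2 * a) * ENNReal.ofReal (2 * b) ^ (n - 1) := by
  have hImeas : ∀ i : Fin n, MeasurableSet (if i = i0 then Icc (-a) a else Icc (-b) b) :=
    fun i => by by_cases hi : i = i0 <;> simp [hi, measurableSet_Icc]
  rw [(EuclideanSpace.volume_preserving_symm_measurableEquiv_toLp (Fin n)).measure_preimage
    (MeasurableSet.univ_pi hImeas).nullMeasurableSet, volume_pi_pi]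
  have hprod : ∀ i : Fin n, volume (if i = i0 then Icc (-a) a else Icc (-b) b)
      = if i = i0 then ENNReal.ofReal (2 * a) else ENNReal.ofReal (2 * b) := by
    intro i
    by_cases hi : i = i0
    · rw [if_pos hi, if_pos hi, Real.volume_Icc]
      congr 1; ring
    · rw [if_neg hi, if_neg hi, Real.volume_Icc]
      congr 1; ring
  simp_rw [hprod]
  rw [← Finset.prod_erase_mul _ _ (Finset.mem_univ i0), if_pos rfl]
  have h2 : ∀ x ∈ Finset.univ.erase i0,
      (if x = i0 then ENNReal.ofReal (2*a) else ENNReal.ofReal (2*b)) = ENNReal.ofReal (2*b) :=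
    fun x hx => if_neg (Finset.ne_of_mem_erase hx)
  rw [Finset.prod_congr rfl h2, Finset.prod_const,
    Finset.card_erase_of_mem (Finset.mem_univ i0), Finset.card_univ, Fintype.card_fin,
    mul_comm]

lemma coord_abs_le_norm {n : ℕ} (z : EuclideanSpace ℝ (Fin n)) (i : Fin n) :
    |z i| ≤ ‖z‖ := by
  rw [EuclideanSpace.norm_eq]
  calc |z i| = Real.sqrt (‖z i‖ ^ 2) := by
        rw [Real.sqrt_sq_eq_abs, Real.norm_eq_abs, abs_abs]
    _ ≤ Real.sqrt (∑ j, ‖z j‖ ^ 2) :=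
        Real.sqrt_le_sqrt (Finset.single_le_sum (f := fun j => ‖z j‖ ^ 2) (fun j _ => sq_nonneg _) (Finset.mem_univ i))
open scoped RealInnerProductSpace


/-- The closed `λε`-neighborhood of a closed symmetric convex subset of the
ball of radius `R` in `ℝⁿ` whose inradius is less than `ε ∈ (0,1]` has Lebesgue
measure at most `C·ε`, where `C` depends only on `n`, `R`, and `λ`. -/
theorem symmetric_convex_neighborhood_volume (n : ℕ) (hn : 1 ≤ n)
    (R : ℝ) (hR : 0 < R) (lam : ℝ) (hlam : 0 ≤ lam) :
    ∃ C : ℝ, 0 < C ∧ ∀ ε : ℝ, 0 < ε → ε ≤ 1 →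
      ∀ K : Set (EuclideanSpace ℝ (Fin n)), IsClosed K → Convex ℝ K →
        (∀ x ∈ K, -x ∈ K) → K ⊆ Metric.closedBall 0 R →
        ¬ Metric.closedBall 0 ε ⊆ K →
        MeasureTheory.volume (Metric.cthickening (lam * ε) K)
          ≤ ENNReal.ofReal (C * ε) := by
  have hn0 : 0 < n := hn
  refine ⟨2 * (1 + lam) * (2 * (R + lam)) ^ (n - 1), by positivity, ?_⟩
  intro ε hε hε1 K hKc hKconv hKsym hKR hKball
  rcases K.eq_empty_or_nonempty with rfl | hKne
  · simp
  have h0K : (0 : EuclideanSpace ℝ (Fin n)) ∈ K := by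
    obtain ⟨y, hy⟩ := hKne
    have := hKconv hy (hKsym y hy) (by norm_num : (0:ℝ) ≤ 1/2) (by norm_num : (0:ℝ) ≤ 1/2) (by norm_num)
    simpa using this
  -- separation
  obtain ⟨x, hxball, hxK⟩ : ∃ x, x ∈ closedBall (0:EuclideanSpace ℝ (Fin n)) ε ∧ x ∉ K := by
    by_contra h
    push_neg at h
    exact hKball h
  obtain ⟨f, u, hfK, hfx⟩ := geometric_hahn_banach_closed_point hKconv hKc hxK
  have hu0 : 0 < u := by have := hfK 0 h0K; simpa using this
  -- the unit separating vector
  set v : EuclideanSpace ℝ (Fin n) := (InnerProductSpace.toDual ℝ _).symm f with hv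
  have hvf : ∀ y, ⟪v, y⟫ = f y := fun y => InnerProductSpace.toDual_symm_apply
  have hvnorm : ‖v‖ = ‖f‖ := by
    simp [hv]
  have hfne : ‖f‖ ≠ 0 := by
    intro h
    have : f x = 0 := by
      have : f = 0 := by rwa [norm_eq_zero] at h
      simp [this]
    linarith [hfx]
  have hfpos : 0 < ‖f‖ := lt_of_le_of_ne (norm_nonneg f) (Ne.symm hfne)
  set w : EuclideanSpace ℝ (Fin n) := ‖f‖⁻¹ • v with hw
  have hwnorm : ‖w‖ = 1 := by
    rw [hw, norm_smul, norm_inv, Real.norm_eq_abs, abs_of_pos hfpos, hvnorm]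
    field_simp
  -- K is in the slab |⟪w, y⟫| ≤ ε
  have hslabK : ∀ y ∈ K, |⟪w, y⟫| ≤ ε := by
    intro y hy
    have h1 : f y < u := hfK y hy
    have h2 : f (-y) < u := hfK _ (hKsym y hy)
    have h2' : -f y < u := by simpa using h2
    have hu_lt : u < ‖f‖ * ε := by
      have : u < f x := hfx
      have hfx_le : f x ≤ ‖f‖ * ‖x‖ :=
        (le_abs_self _).trans ((Real.norm_eq_abs _ ▸ f.le_opNorm x))
      have hxnorm : ‖x‖ ≤ ε := by simpa using hxball
      nlinarith [hfpos]
    have habs : |f y| < ‖f‖ * ε := by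
      rw [abs_lt]; constructor <;> nlinarith
    have : ⟪w, y⟫ = ‖f‖⁻¹ * f y := by
      rw [hw, inner_smul_left]
      simp [hvf y]
    rw [this, abs_mul, abs_inv, abs_of_pos hfpos]
    rw [inv_mul_le_iff₀ hfpos]
    nlinarith [habs]
  -- thickening is in a slab ∩ ball
  set a : ℝ := (1 + lam) * ε with ha
  set b : ℝ := R + lam with hb
  have hsubset : Metric.cthickening (lam * ε) K ⊆
      {y : EuclideanSpace ℝ (Fin n) | |⟪w, y⟫| ≤ a ∧ ‖y‖ ≤ b} := by
    intro y hy
    have hδ : 0 ≤ lam * ε := by positivity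
    have hinf : Metric.infDist y K ≤ lam * ε := by
      rw [Metric.mem_cthickening_iff] at hy
      rw [Metric.infDist]
      exact ENNReal.toReal_le_of_le_ofReal hδ hy
    obtain ⟨z, hzK, hzd⟩ := hKc.exists_infDist_eq_dist hKne y
    have hdzy : dist y z ≤ lam * ε := by rw [← hzd]; exact hinf
    have hnorm : ‖y - z‖ ≤ lam * ε := by
      rw [← dist_eq_norm]; exact hdzy
    constructor
    · have heq : ⟪w, y⟫ = ⟪w, z⟫ + ⟪w, y - z⟫ := by
        rw [inner_sub_right]; ring
      rw [heq]
      have h1 := hslabK z hzK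
      have h2 : |⟪w, y - z⟫| ≤ lam * ε := by
        calc |⟪w, y - z⟫| ≤ ‖w‖ * ‖y - z‖ := abs_real_inner_le_norm w (y - z)
          _ = ‖y - z‖ := by rw [hwnorm, one_mul]
          _ ≤ lam * ε := hnorm
      calc |⟪w, z⟫ + ⟪w, y - z⟫| ≤ |⟪w, z⟫| + |⟪w, y - z⟫| := abs_add_le _ _
        _ ≤ ε + lam * ε := add_le_add h1 h2
        _ = a := by ring
    · have hz : ‖z‖ ≤ R := by simpa using hKR hzK
      calc ‖y‖ ≤ ‖z‖ + ‖y - z‖ := by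
            have := norm_add_le z (y - z); simpa using this
        _ ≤ R + lam * ε := add_le_add hz hnorm
        _ ≤ b := by rw [hb]; nlinarith
  -- orthonormal basis with first vector w
  set i0 : Fin n := ⟨0, hn0⟩ with hi0
  have hcard : Module.finrank ℝ (EuclideanSpace ℝ (Fin n)) = Fintype.card (Fin n) := by simp
  have horth : Orthonormal ℝ (({i0} : Set (Fin n)).restrict (fun _ => w)) := by
    constructor
    · intro i; exact hwnorm
    · intro i j hij; exact absurd (Subsingleton.elim i j) hij
  obtain ⟨bas, hbas⟩ := horth.exists_orthonormalBasis_extension_of_card_eq hcard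
  have hb0 : bas i0 = w := hbas i0 (Set.mem_singleton _)
  -- the box
  set Bx : Set (EuclideanSpace ℝ (Fin n)) :=
    ((MeasurableEquiv.toLp 2 (Fin n → ℝ)).symm) ⁻¹'
      (Set.pi Set.univ (fun i => if i = i0 then Icc (-a) a else Icc (-b) b)) with hBxdef
  have hsubset2 : {y : EuclideanSpace ℝ (Fin n) | |⟪w, y⟫| ≤ a ∧ ‖y‖ ≤ b}
      ⊆ bas.repr ⁻¹' Bx := by
    rintro y ⟨hy1, hy2⟩
    refine Set.mem_preimage.mpr (Set.mem_preimage.mpr (Set.mem_univ_pi.mpr ?_))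
    intro i
    show bas.repr y i ∈ (if i = i0 then Icc (-a) a else Icc (-b) b)
    have hrep : bas.repr y i = ⟪bas i, y⟫ := bas.repr_apply_apply y i
    by_cases hi : i = i0
    · subst hi
      rw [if_pos rfl, Set.mem_Icc, hrep, hb0]
      constructor
      · linarith [neg_abs_le (⟪w, y⟫ : ℝ), hy1]
      · linarith [le_abs_self (⟪w, y⟫ : ℝ)]
    · rw [if_neg hi, Set.mem_Icc]
      have habs : |bas.repr y i| ≤ ‖bas.repr y‖ := coord_abs_le_norm _ i
      rw [bas.repr.norm_map] at habs
      constructor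
      · linarith [neg_abs_le (bas.repr y i), habs, hy2]
      · linarith [le_abs_self (bas.repr y i), habs, hy2]
  have hBxmeas : MeasurableSet Bx :=
    ((MeasurableEquiv.toLp 2 (Fin n → ℝ)).symm).measurable
      (MeasurableSet.univ_pi (fun i => by by_cases hi : i = i0 <;> simp [hi, measurableSet_Icc]))
  calc volume (Metric.cthickening (lam * ε) K)
      ≤ volume (bas.repr ⁻¹' Bx) := measure_mono (hsubset.trans hsubset2)
    _ = volume Bx := bas.measurePreserving_repr.measure_preimage hBxmeas.nullMeasurableSet
    _ = ENNReal.ofReal (2 * a) * ENNReal.ofReal (2 * b) ^ (n - 1) := box_volume i0 a b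
    _ = ENNReal.ofReal (2 * (1 + lam) * (2 * (R + lam)) ^ (n - 1) * ε) := by
        rw [← ENNReal.ofReal_pow (by positivity : (0:ℝ) ≤ 2 * b),
          ← ENNReal.ofReal_mul (by positivity : (0:ℝ) ≤ 2 * a)]
        congr 1
        rw [ha, hb]
        ring
end

section
/- Let n, m ≥ 1. There exists a constant C > 0, depending only on n and m, with the following property: for every ε ∈ (0, 1) and every linear map L : ℝⁿ → ℝᵐ with operator norm at most 1 (so L is 1-Lipschitz) for which there exists a nonzero vector v ∈ ℝⁿ with ‖L(v)‖ < ε·‖v‖, and for every x ∈ ℝⁿ and ℓ > 0, there exist points x₁,…,x_k ∈ L(closedBall(x, ℓ)) with k ≤ C·ε^{1−n} such that L(closedBall(x, ℓ)) ⊆ ⋃_{i=1}^k closedBall(x_i, ε·ℓ). -/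
open Metric Finset Module

set_option maxHeartbeats 1000000 in
/-- Euclidean case of the nets lemma: a linear map `L : ℝⁿ → ℝᵐ` of operator
norm at most `1` that contracts some direction by a factor `ε` maps each closed
ball of radius `ℓ` into a union of at most `C·ε^{1-n}` closed balls of radius
`ε·ℓ` centered at points of the image, where `C` depends only on `n` and `m`. -/
theorem nets_lemma_euclidean (n m : ℕ) (hn : 1 ≤ n) (hm : 1 ≤ m) :
    ∃ C : ℝ, 0 < C ∧ ∀ ε : ℝ, 0 < ε → ε < 1 →
      ∀ L : EuclideanSpace ℝ (Fin n) →L[ℝ] EuclideanSpace ℝ (Fin m), ‖L‖ ≤ 1 →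
      (∃ v : EuclideanSpace ℝ (Fin n), v ≠ 0 ∧ ‖L v‖ < ε * ‖v‖) →
      ∀ (x : EuclideanSpace ℝ (Fin n)) (ℓ : ℝ), 0 < ℓ →
        ∃ s : Finset (EuclideanSpace ℝ (Fin m)),
          ↑s ⊆ L '' Metric.closedBall x ℓ ∧
          (s.card : ℝ) ≤ C * ε ^ ((1 : ℝ) - n) ∧
          L '' Metric.closedBall x ℓ ⊆ ⋃ y ∈ s, Metric.closedBall y (ε * ℓ) := by
  classical
  have hsn1 : (1:ℝ) ≤ Real.sqrt n := by
    rw [show (1:ℝ) = Real.sqrt 1 by simp]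
    exact Real.sqrt_le_sqrt (by exact_mod_cast hn)
  have hsn0 : (0:ℝ) < Real.sqrt n := lt_of_lt_of_le one_pos hsn1
  refine ⟨5 * (4 * Real.sqrt n + 2) ^ (n - 1), by positivity, ?_⟩
  rintro ε hε hε1 L hL ⟨v, hv, hvL⟩ x ℓ hℓ
  have hv0 : (0:ℝ) < ‖v‖ := norm_pos_iff.mpr hv
  -- the contracted unit vector
  obtain ⟨u, hu_def⟩ : ∃ u : EuclideanSpace ℝ (Fin n), u = ‖v‖⁻¹ • v := ⟨_, rfl⟩
  have hu : ‖u‖ = 1 := by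
    rw [hu_def, norm_smul, norm_inv, norm_norm]
    field_simp
  have hu0 : u ≠ 0 := by
    intro h; rw [h, norm_zero] at hu; norm_num at hu
  have hLu : ‖L u‖ < ε := by
    have h1 : ‖L u‖ = ‖v‖⁻¹ * ‖L v‖ := by
      rw [hu_def, map_smul, norm_smul, norm_inv, norm_norm]
    rw [h1]
    calc ‖v‖⁻¹ * ‖L v‖ < ‖v‖⁻¹ * (ε * ‖v‖) :=
          mul_lt_mul_of_pos_left hvL (inv_pos.mpr hv0)
      _ = ε := by field_simp
  -- dimension of the orthogonal complement
  set d : ℕ := finrank ℝ ↥((ℝ ∙ u)ᗮ) with hd_def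
  have hd : d = n - 1 := by
    have h1 : finrank ℝ (ℝ ∙ u) = 1 := finrank_span_singleton hu0
    have hsum := Submodule.finrank_add_finrank_orthogonal (K := (ℝ ∙ u))
    rw [h1, finrank_euclideanSpace_fin] at hsum
    rw [hd_def]
    omega
  have hdn : (d:ℝ) ≤ (n:ℝ) := by
    have : d ≤ n := by omega
    exact_mod_cast this
  obtain ⟨b, -⟩ : ∃ b : OrthonormalBasis (Fin d) ℝ ↥((ℝ ∙ u)ᗮ), True :=
    ⟨stdOrthonormalBasis ℝ ↥((ℝ ∙ u)ᗮ), trivial⟩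
  -- grid mesh sizes
  obtain ⟨δ₀, hδ₀⟩ : ∃ t : ℝ, t = ℓ / 2 := ⟨_, rfl⟩
  obtain ⟨δ₁, hδ₁⟩ : ∃ t : ℝ, t = ε * ℓ / (2 * Real.sqrt n) := ⟨_, rfl⟩
  have hδ₀0 : 0 < δ₀ := by rw [hδ₀]; positivity
  have hδ₁0 : 0 < δ₁ := by rw [hδ₁]; positivity
  -- the grid map
  obtain ⟨g, hg_def⟩ : ∃ g : EuclideanSpace ℝ (Fin n) → ℤ × (Fin d → ℤ),
      g = fun y => (⌊(inner ℝ u (y - x) : ℝ) / δ₀⌋,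
        fun i => ⌊(b.repr (Submodule.orthogonalProjectionOnto ((ℝ ∙ u)ᗮ) (y - x)) i) / δ₁⌋) := ⟨_, rfl⟩
  -- points with equal floors are close
  have hfl : ∀ (p q δ : ℝ), 0 < δ → ⌊p/δ⌋ = ⌊q/δ⌋ → |p - q| ≤ δ := by
    intro p q δ hδ h
    have h1 : p / δ - q / δ < 1 := by
      have a1 := Int.lt_floor_add_one (p/δ)
      have a2 := Int.floor_le (q/δ)
      rw [h] at a1
      linarith
    have h2 : q / δ - p / δ < 1 := by
      have a1 := Int.lt_floor_add_one (q/δ)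
      have a2 := Int.floor_le (p/δ)
      rw [h] at a2
      linarith
    have h3 : p - q = δ * (p/δ - q/δ) := by field_simp
    rw [h3, abs_mul, abs_of_pos hδ]
    have h4 : |p/δ - q/δ| ≤ 1 := abs_le.mpr ⟨by linarith, by linarith⟩
    calc δ * |p/δ - q/δ| ≤ δ * 1 := mul_le_mul_of_nonneg_left h4 hδ.le
      _ = δ := mul_one δ
  -- key estimate: same cell ⇒ images within ε·ℓ
  have hclose : ∀ y ∈ closedBall x ℓ, ∀ z ∈ closedBall x ℓ, g y = g z →
      ‖L y - L z‖ ≤ ε * ℓ := by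
    intro y hy z hz hg
    rw [hg_def, Prod.mk.injEq] at hg
    obtain ⟨hg1, hg2⟩ := hg
    obtain ⟨a, ha_def⟩ : ∃ a : EuclideanSpace ℝ (Fin n), a = y - z := ⟨_, rfl⟩
    have hsub : (y - x) - (z - x) = a := by rw [ha_def]; abel
    have ht : |(inner ℝ u a : ℝ)| ≤ δ₀ := by
      have h1 : (inner ℝ u (y-x) : ℝ) - (inner ℝ u (z-x) : ℝ) = inner ℝ u a := by
        rw [← inner_sub_right, hsub]
      rw [← h1]
      exact hfl _ _ _ hδ₀0 hg1
    have hPa : ‖(Submodule.orthogonalProjectionOnto ((ℝ ∙ u)ᗮ) a :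
        EuclideanSpace ℝ (Fin n))‖ ≤ Real.sqrt n * δ₁ := by
      have hPsub : Submodule.orthogonalProjectionOnto ((ℝ ∙ u)ᗮ) a
          = Submodule.orthogonalProjectionOnto ((ℝ ∙ u)ᗮ) (y - x)
            - Submodule.orthogonalProjectionOnto ((ℝ ∙ u)ᗮ) (z - x) := by
        rw [← map_sub, hsub]
      have hcoord : ∀ i, |b.repr (Submodule.orthogonalProjectionOnto ((ℝ ∙ u)ᗮ) a) i| ≤ δ₁ := by
        intro i
        have h2 : b.repr (Submodule.orthogonalProjectionOnto ((ℝ ∙ u)ᗮ) a) i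
            = b.repr (Submodule.orthogonalProjectionOnto ((ℝ ∙ u)ᗮ) (y-x)) i
              - b.repr (Submodule.orthogonalProjectionOnto ((ℝ ∙ u)ᗮ) (z-x)) i := by
          rw [hPsub, map_sub]
          rfl
        rw [h2]
        exact hfl _ _ _ hδ₁0 (congrFun hg2 i)
      have h3 : ‖(Submodule.orthogonalProjectionOnto ((ℝ ∙ u)ᗮ) a : EuclideanSpace ℝ (Fin n))‖
          = ‖b.repr (Submodule.orthogonalProjectionOnto ((ℝ ∙ u)ᗮ) a)‖ := by
        rw [b.repr.norm_map (Submodule.orthogonalProjectionOnto ((ℝ ∙ u)ᗮ) a)]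
        rfl
      rw [h3, EuclideanSpace.norm_eq]
      have h4 : ∑ i, ‖b.repr (Submodule.orthogonalProjectionOnto ((ℝ ∙ u)ᗮ) a) i‖ ^ 2
          ≤ (d:ℝ) * δ₁^2 := by
        calc ∑ i, ‖b.repr (Submodule.orthogonalProjectionOnto ((ℝ ∙ u)ᗮ) a) i‖ ^ 2
            ≤ ∑ _i : Fin d, δ₁^2 := by
              apply Finset.sum_le_sum
              intro i _
              have h6 := hcoord i
              rw [Real.norm_eq_abs]
              nlinarith [abs_nonneg (b.repr (Submodule.orthogonalProjectionOnto ((ℝ ∙ u)ᗮ) a) i)]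
          _ = (d:ℝ) * δ₁^2 := by simp [mul_comm]
      calc Real.sqrt (∑ i, ‖b.repr (Submodule.orthogonalProjectionOnto ((ℝ ∙ u)ᗮ) a) i‖ ^ 2)
          ≤ Real.sqrt ((d:ℝ) * δ₁^2) := Real.sqrt_le_sqrt h4
        _ = Real.sqrt d * δ₁ := by
            rw [Real.sqrt_mul (by positivity), Real.sqrt_sq hδ₁0.le]
        _ ≤ Real.sqrt n * δ₁ := by
            have h7 := Real.sqrt_le_sqrt hdn
            nlinarith [Real.sqrt_nonneg (d:ℝ)]
    have hdec : a = (inner ℝ u a : ℝ) • u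
        + (Submodule.orthogonalProjectionOnto ((ℝ ∙ u)ᗮ) a : EuclideanSpace ℝ (Fin n)) := by
      conv_lhs => rw [← Submodule.starProjection_add_starProjection_orthogonal (K := ℝ ∙ u) a]
      rw [Submodule.starProjection_unit_singleton ℝ hu a, Submodule.starProjection_apply]
    have hLa : L y - L z = (inner ℝ u a : ℝ) • L u
        + L (Submodule.orthogonalProjectionOnto ((ℝ ∙ u)ᗮ) a : EuclideanSpace ℝ (Fin n)) := by
      rw [← map_sub, ← ha_def]
      conv_lhs => rw [hdec]
      rw [map_add, map_smul]
    rw [hLa]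
    have hb1 : ‖(inner ℝ u a : ℝ) • L u‖ ≤ δ₀ * ε := by
      rw [norm_smul, Real.norm_eq_abs]
      exact mul_le_mul ht hLu.le (norm_nonneg _) hδ₀0.le
    have hb2 : ‖L (Submodule.orthogonalProjectionOnto ((ℝ ∙ u)ᗮ) a : EuclideanSpace ℝ (Fin n))‖
        ≤ Real.sqrt n * δ₁ := by
      calc ‖L (Submodule.orthogonalProjectionOnto ((ℝ ∙ u)ᗮ) a : EuclideanSpace ℝ (Fin n))‖
          ≤ ‖L‖ * ‖(Submodule.orthogonalProjectionOnto ((ℝ ∙ u)ᗮ) a : EuclideanSpace ℝ (Fin n))‖ :=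
            L.le_opNorm _
        _ ≤ 1 * (Real.sqrt n * δ₁) := mul_le_mul hL hPa (norm_nonneg _) zero_le_one
        _ = Real.sqrt n * δ₁ := one_mul _
    have heq : δ₀ * ε + Real.sqrt n * δ₁ = ε * ℓ := by
      rw [hδ₀, hδ₁]
      field_simp
      ring
    calc ‖(inner ℝ u a : ℝ) • L u
          + L (Submodule.orthogonalProjectionOnto ((ℝ ∙ u)ᗮ) a : EuclideanSpace ℝ (Fin n))‖
        ≤ ‖(inner ℝ u a : ℝ) • L u‖
          + ‖L (Submodule.orthogonalProjectionOnto ((ℝ ∙ u)ᗮ) a : EuclideanSpace ℝ (Fin n))‖ :=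
          norm_add_le _ _
      _ ≤ δ₀ * ε + Real.sqrt n * δ₁ := add_le_add hb1 hb2
      _ = ε * ℓ := heq
  -- the index set
  obtain ⟨M, hM_def⟩ : ∃ t : ℝ, t = ℓ / δ₁ := ⟨_, rfl⟩
  have hM0 : 0 < M := by rw [hM_def]; positivity
  obtain ⟨I, hI_def⟩ : ∃ I : Finset (ℤ × (Fin d → ℤ)),
      I = Finset.Icc (-2 : ℤ) 2 ×ˢ
        Fintype.piFinset (fun _ : Fin d => Finset.Icc ⌊-M⌋ ⌊M⌋) := ⟨_, rfl⟩
  -- every point of the ball lands in the index set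
  have hrange : ∀ y ∈ closedBall x ℓ, g y ∈ I := by
    intro y hy
    have hyx : ‖y - x‖ ≤ ℓ := by
      rw [← dist_eq_norm]
      exact mem_closedBall.mp hy
    rw [hg_def, hI_def, Finset.mem_product]
    constructor
    · -- first coordinate
      dsimp only
      have h1 : |(inner ℝ u (y - x) : ℝ)| ≤ ℓ := by
        calc |(inner ℝ u (y - x) : ℝ)| ≤ ‖u‖ * ‖y - x‖ := abs_real_inner_le_norm u (y - x)
          _ = ‖y - x‖ := by rw [hu, one_mul]
          _ ≤ ℓ := hyx
      rw [Finset.mem_Icc]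
      have hq : |(inner ℝ u (y - x) : ℝ) / δ₀| ≤ 2 := by
        rw [abs_div, abs_of_pos hδ₀0, div_le_iff₀ hδ₀0, hδ₀]
        linarith
      rw [abs_le] at hq
      constructor
      · exact Int.le_floor.mpr (by push_cast; linarith [hq.1])
      · exact Int.floor_le_iff.mpr (by push_cast; linarith [hq.2])
    · -- remaining coordinates
      dsimp only
      rw [Fintype.mem_piFinset]
      intro i
      have h1 : |b.repr (Submodule.orthogonalProjectionOnto ((ℝ ∙ u)ᗮ) (y - x)) i| ≤ ℓ := by
        rw [b.repr_apply_apply]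
        calc |(inner ℝ (b i) (Submodule.orthogonalProjectionOnto ((ℝ ∙ u)ᗮ) (y-x)) : ℝ)|
            ≤ ‖(b i : ↥((ℝ ∙ u)ᗮ))‖ * ‖Submodule.orthogonalProjectionOnto ((ℝ ∙ u)ᗮ) (y-x)‖ :=
              abs_real_inner_le_norm _ _
          _ = ‖Submodule.orthogonalProjectionOnto ((ℝ ∙ u)ᗮ) (y-x)‖ := by rw [b.orthonormal.1 i, one_mul]
          _ ≤ ‖y - x‖ := by
              calc ‖Submodule.orthogonalProjectionOnto ((ℝ ∙ u)ᗮ) (y-x)‖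
                  ≤ ‖Submodule.orthogonalProjectionOnto ((ℝ ∙ u)ᗮ)‖ * ‖y - x‖ :=
                    (Submodule.orthogonalProjectionOnto ((ℝ ∙ u)ᗮ)).le_opNorm _
                _ ≤ 1 * ‖y - x‖ :=
                    mul_le_mul_of_nonneg_right (Submodule.orthogonalProjectionOnto_norm_le _) (norm_nonneg _)
                _ = ‖y - x‖ := one_mul _
          _ ≤ ℓ := hyx
      rw [Finset.mem_Icc]
      rw [abs_le] at h1
      have hq1 : -M ≤ b.repr (Submodule.orthogonalProjectionOnto ((ℝ ∙ u)ᗮ) (y - x)) i / δ₁ := by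
        rw [hM_def, ← neg_div]
        exact (div_le_div_iff_of_pos_right hδ₁0).mpr h1.1
      have hq2 : b.repr (Submodule.orthogonalProjectionOnto ((ℝ ∙ u)ᗮ) (y - x)) i / δ₁ ≤ M := by
        rw [hM_def]
        exact (div_le_div_iff_of_pos_right hδ₁0).mpr h1.2
      exact ⟨Int.floor_le_floor hq1, Int.floor_le_floor hq2⟩
  -- cells meeting the ball, with chosen representatives
  obtain ⟨T, hT_def⟩ : ∃ T : Finset (ℤ × (Fin d → ℤ)),
      T = I.filter (fun c => ∃ y ∈ closedBall x ℓ, g y = c) := ⟨_, rfl⟩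
  obtain ⟨pick, hpick_def⟩ : ∃ pick : ℤ × (Fin d → ℤ) → EuclideanSpace ℝ (Fin n),
      pick = fun c => if h : ∃ y ∈ closedBall x ℓ, g y = c then h.choose else x := ⟨_, rfl⟩
  have hpick : ∀ c ∈ T, pick c ∈ closedBall x ℓ ∧ g (pick c) = c := by
    intro c hc
    rw [hT_def, Finset.mem_filter] at hc
    obtain ⟨-, h⟩ := hc
    rw [hpick_def]
    simp only [dif_pos h]
    exact h.choose_spec
  refine ⟨T.image (fun c => L (pick c)), ?_, ?_, ?_⟩
  · intro p hp
    rw [Finset.coe_image, Set.mem_image] at hp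
    obtain ⟨c, hc, rfl⟩ := hp
    exact ⟨pick c, (hpick c (by exact_mod_cast hc)).1, rfl⟩
  · -- cardinality bound
    have h1 : (T.image (fun c => L (pick c))).card ≤ I.card := by
      rw [hT_def]
      exact le_trans Finset.card_image_le (Finset.card_filter_le _ _)
    have h5 : (Finset.Icc (-2:ℤ) 2).card = 5 := rfl
    have hIcard : I.card = 5 * (Finset.Icc ⌊-M⌋ ⌊M⌋).card ^ d := by
      rw [hI_def, Finset.card_product, Fintype.card_piFinset, h5]
      simp [Finset.prod_const]
    have hMval : M = 2 * Real.sqrt n / ε := by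
      rw [hM_def, hδ₁]
      field_simp
    have hMle : ((Finset.Icc ⌊-M⌋ ⌊M⌋).card : ℝ) ≤ (4 * Real.sqrt n + 2) / ε := by
      have hnn : (0:ℤ) ≤ ⌊M⌋ + 1 - ⌊-M⌋ := by
        have hf1 : ⌊-M⌋ ≤ ⌊M⌋ := Int.floor_le_floor (by linarith)
        omega
      have hcast : ((Finset.Icc ⌊-M⌋ ⌊M⌋).card : ℝ) = (⌊M⌋:ℝ) + 1 - (⌊-M⌋:ℝ) := by
        have h0 := Int.toNat_of_nonneg hnn
        rw [Int.card_Icc]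
        exact_mod_cast congrArg (fun z : ℤ => (z:ℝ)) h0
      have h2 : (⌊M⌋:ℝ) ≤ M := Int.floor_le M
      have h3 : -(M+1) ≤ (⌊-M⌋:ℝ) := by
        have h8 := Int.sub_one_lt_floor (-M)
        linarith
      have h4 : 2*M + 2 = (4 * Real.sqrt n + 2*ε)/ε := by
        rw [hMval]
        field_simp
        ring
      have h6 : (4 * Real.sqrt n + 2*ε)/ε ≤ (4 * Real.sqrt n + 2)/ε := by
        gcongr
        linarith
      rw [hcast]
      linarith
    have hrpow : ε ^ ((1:ℝ) - n) = (ε ^ (n-1))⁻¹ := by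
      rw [show ((1:ℝ) - n) = -((n - 1 : ℕ) : ℝ) by push_cast [Nat.cast_sub hn]; ring,
        Real.rpow_neg hε.le, Real.rpow_natCast]
    have hc1 : ((T.image (fun c => L (pick c))).card : ℝ) ≤ (I.card : ℝ) :=
      Nat.cast_le.mpr h1
    have hc2 : (I.card : ℝ) = 5 * ((Finset.Icc ⌊-M⌋ ⌊M⌋).card : ℝ) ^ d := by
      rw [hIcard]
      push_cast
      ring
    have hc3 : ((Finset.Icc ⌊-M⌋ ⌊M⌋).card : ℝ) ^ d ≤ ((4 * Real.sqrt n + 2)/ε) ^ d :=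
      pow_le_pow_left₀ (by positivity) hMle d
    have hc4 : ((4 * Real.sqrt n + 2)/ε) ^ d
        = (4 * Real.sqrt n + 2) ^ (n-1) * ε ^ ((1:ℝ) - n) := by
      rw [hrpow, hd, div_pow, div_eq_mul_inv]
    calc ((T.image (fun c => L (pick c))).card : ℝ)
        ≤ (I.card : ℝ) := hc1
      _ = 5 * ((Finset.Icc ⌊-M⌋ ⌊M⌋).card : ℝ) ^ d := hc2
      _ ≤ 5 * ((4 * Real.sqrt n + 2)/ε) ^ d := by
          have h9 : (0:ℝ) ≤ 5 := by norm_num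
          exact mul_le_mul_of_nonneg_left hc3 h9
      _ = 5 * (4 * Real.sqrt n + 2) ^ (n-1) * ε ^ ((1:ℝ) - n) := by
          rw [hc4, mul_assoc]
  · -- covering
    rintro p ⟨y, hy, rfl⟩
    have hcT : g y ∈ T := by
      rw [hT_def, Finset.mem_filter]
      exact ⟨hrange y hy, y, hy, rfl⟩
    have hp := hpick _ hcT
    refine Set.mem_iUnion₂.mpr ⟨L (pick (g y)), Finset.mem_image_of_mem _ hcT, ?_⟩
    rw [mem_closedBall, dist_eq_norm]
    exact hclose y hy (pick (g y)) hp.1 hp.2.symm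
end

section
/- Let n ≥ 1. There exists a constant C > 0, depending only on n, with the following property: for every ε ∈ (0, 1) and every closed convex symmetric set K in n-dimensional Euclidean space with K contained in the closed unit ball centered at the origin and with the closed ball of radius ε centered at the origin NOT contained in K, every ε-separated subset S of K is finite with cardinality at most C·ε^{1−n}. -/
open Metric MeasureTheory Set InnerProductSpace
open scoped RealInnerProductSpace ENNReal

/-- An `ε`-separated subset of a closed symmetric convex subset of the unit
ball of `ℝⁿ` whose inradius is less than `ε` has at most `C·ε^{1-n}` points,
where `C` depends only on `n`. -/
theorem separated_net_in_thin_convex_body (n : ℕ) (hn : 1 ≤ n) :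
    ∃ C : ℝ, 0 < C ∧ ∀ ε : ℝ, 0 < ε → ε < 1 →
      ∀ K : Set (EuclideanSpace ℝ (Fin n)), IsClosed K → Convex ℝ K →
        (∀ x ∈ K, -x ∈ K) → K ⊆ Metric.closedBall 0 1 →
        ¬ Metric.closedBall 0 ε ⊆ K →
        ∀ S : Set (EuclideanSpace ℝ (Fin n)), S ⊆ K →
          (∀ a ∈ S, ∀ b ∈ S, a ≠ b → ε ≤ dist a b) →
          S.Finite ∧ (S.ncard : ℝ) ≤ C * ε ^ ((1 : ℝ) - n) := by
  obtain ⟨m, rfl⟩ : ∃ m, n = m + 1 := ⟨n - 1, (Nat.succ_pred_eq_of_pos hn).symm⟩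
  set n := m + 1 with hn_def
  set c : ℝ≥0∞ := volume (ball (0 : EuclideanSpace ℝ (Fin n)) 1) with hc
  have hc0 : 0 < c := measure_ball_pos _ _ one_pos
  have hctop : c ≠ ⊤ := measure_ball_lt_top.ne
  have hcR : 0 < c.toReal := ENNReal.toReal_pos hc0.ne' hctop
  refine ⟨(5/2)^n * 4^n / c.toReal, by positivity, ?_⟩
  intro ε hε hε1 K hKcl hKconv hKsymm hKball hKthin S hSK hSsep
  set C : ℝ := (5/2)^n * 4^n / c.toReal with hCdef
  have hCpos : 0 < C := by positivity
  have hrpow : ε ^ ((1 : ℝ) - n) = ε / ε ^ n := by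
    rw [Real.rpow_sub hε, Real.rpow_one, Real.rpow_natCast]
  rcases S.eq_empty_or_nonempty with rfl | ⟨s₀, hs₀⟩
  · refine ⟨Set.finite_empty, ?_⟩
    simp only [Set.ncard_empty, Nat.cast_zero]
    positivity
  -- 0 ∈ K
  have h0K : (0 : EuclideanSpace ℝ (Fin n)) ∈ K := by
    have h1 : s₀ ∈ K := hSK hs₀
    have h2 : -s₀ ∈ K := hKsymm _ h1
    have := hKconv h1 h2 (by norm_num : (0:ℝ) ≤ 1/2) (by norm_num : (0:ℝ) ≤ 1/2) (by norm_num)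
    simpa using this
  -- separating functional
  obtain ⟨y, hy, hyK⟩ := Set.not_subset.1 hKthin
  have hynorm : ‖y‖ ≤ ε := by simpa using mem_closedBall_iff_norm.1 hy
  obtain ⟨f, u, hfK, hfy⟩ := geometric_hahn_banach_closed_point hKconv hKcl hyK
  have hu0 : 0 < u := by have := hfK 0 h0K; simpa using this
  have hfy' : u < ‖f‖ * ε := by
    have h1 : f y ≤ ‖f‖ * ‖y‖ := le_trans (le_abs_self _) (f.le_opNorm y)
    have h2 : ‖f‖ * ‖y‖ ≤ ‖f‖ * ε := mul_le_mul_of_nonneg_left hynorm (norm_nonneg _)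
    linarith
  have hfpos : 0 < ‖f‖ := by
    rcases (norm_nonneg f).lt_or_eq with h | h
    · exact h
    · exfalso; rw [← h] at hfy'; simp at hfy'; linarith
  set v : EuclideanSpace ℝ (Fin n) := ‖f‖⁻¹ • (toDual ℝ (EuclideanSpace ℝ (Fin n))).symm f with hvdef
  have hvnorm : ‖v‖ = 1 := by
    rw [hvdef, norm_smul, LinearIsometryEquiv.norm_map]
    simp [abs_of_pos (inv_pos.2 hfpos), inv_mul_cancel₀ hfpos.ne']
  have hinner : ∀ z : EuclideanSpace ℝ (Fin n), ⟪v, z⟫ = ‖f‖⁻¹ * f z := by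
    intro z
    rw [hvdef, real_inner_smul_left, toDual_symm_apply]
  have hvK : ∀ x ∈ K, |⟪v, x⟫| ≤ ε := by
    intro x hx
    have h1 : f x < u := hfK x hx
    have h2 : -(f x) < u := by
      have := hfK (-x) (hKsymm x hx); simpa using this
    have habs : |f x| ≤ u := abs_le.2 ⟨by linarith, h1.le⟩
    rw [hinner, abs_mul, abs_of_pos (inv_pos.2 hfpos)]
    calc ‖f‖⁻¹ * |f x| ≤ ‖f‖⁻¹ * u := by
          exact mul_le_mul_of_nonneg_left habs (by positivity)
      _ ≤ ε := by
          rw [inv_mul_le_iff₀ hfpos]; linarith [hfy']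
  -- orthonormal basis with b 0 = v
  have hon : Orthonormal ℝ (({0} : Set (Fin n)).restrict (fun _ => v)) := by
    rw [orthonormal_iff_ite]
    intro i j
    have hij : i = j := by
      ext
      have h1 := i.2; have h2 := j.2
      simp only [Set.mem_singleton_iff] at h1 h2
      rw [h1, h2]
    subst hij
    rw [if_pos rfl]
    change ⟪v, v⟫ = 1
    rw [real_inner_self_eq_norm_mul_norm, hvnorm]
    norm_num
  have hcard : Module.finrank ℝ (EuclideanSpace ℝ (Fin n)) = Fintype.card (Fin n) := by
    simp [finrank_euclideanSpace_fin]
  obtain ⟨b, hb⟩ := hon.exists_orthonormalBasis_extension_of_card_eq hcard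
  have hb0 : b 0 = v := hb 0 rfl
  -- the box
  set d : Fin n → ℝ := fun i => if i = 0 then 5 * ε / 4 else 5 / 4 with hd
  set Box : Set (EuclideanSpace ℝ (Fin n)) :=
    WithLp.ofLp ⁻¹' Set.pi Set.univ (fun i => Set.Icc (-(d i)) (d i)) with hBox
  have hBoxMeas : MeasurableSet Box :=
    (MeasurableSet.univ_pi (fun i => measurableSet_Icc)).preimage (WithLp.measurable_ofLp _ _)
  have hBoxVol : volume Box ≤ ENNReal.ofReal (5 * ε / 2) * ENNReal.ofReal (5 / 2) ^ m := by
    have hpre : volume Box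
        = volume (Set.pi Set.univ (fun i => Set.Icc (-(d i)) (d i)) : Set (Fin n → ℝ)) := by
      rw [← (PiLp.volume_preserving_ofLp (Fin n)).measure_preimage
        (MeasurableSet.univ_pi (fun i => measurableSet_Icc)).nullMeasurableSet]
    rw [hpre, volume_pi_pi]
    have : ∀ i : Fin n, volume (Set.Icc (-(d i)) (d i)) = ENNReal.ofReal (2 * d i) := by
      intro i; rw [Real.volume_Icc]; ring_nf
    simp only [this]
    rw [← Finset.mul_prod_erase Finset.univ _ (Finset.mem_univ 0)]
    have h1 : (2 : ℝ) * d 0 = 5 * ε / 2 := by simp [hd]; ring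
    have h2 : ∀ i ∈ Finset.univ.erase (0 : Fin n), ENNReal.ofReal (2 * d i)
        = ENNReal.ofReal (5 / 2) := by
      intro i hi
      have : i ≠ 0 := Finset.ne_of_mem_erase hi
      simp [hd, this]; norm_num
      rw [← ENNReal.ofReal_ofNat 2, ← ENNReal.ofReal_mul (by norm_num)]; norm_num
    rw [Finset.prod_congr rfl h2, Finset.prod_const, h1]
    have hm : (Finset.univ.erase (0 : Fin n)).card = m := by
      rw [Finset.card_erase_of_mem (Finset.mem_univ _), Finset.card_univ, Fintype.card_fin]
      omega
    rw [hm]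
  -- the key counting bound for finsets
  have key : ∀ T : Finset (EuclideanSpace ℝ (Fin n)), ↑T ⊆ S → (T.card : ℝ) ≤ C * ε ^ ((1 : ℝ) - n) := by
    intro T hTS
    have hdisj : (↑T : Set (EuclideanSpace ℝ (Fin n))).PairwiseDisjoint (fun s => closedBall s (ε / 4)) := by
      intro a ha b hb hab
      exact closedBall_disjoint_closedBall
        (by have := hSsep a (hTS ha) b (hTS hb) hab; linarith)
    have hmeas : ∀ s ∈ T, MeasurableSet (closedBall s (ε / 4)) :=
      fun s _ => measurableSet_closedBall
    have hsub : (⋃ s ∈ T, closedBall s (ε / 4)) ⊆ ⇑b.repr ⁻¹' Box := by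
      rintro z hz
      simp only [Set.mem_iUnion] at hz
      obtain ⟨s, hsT, hzs⟩ := hz
      have hsK : s ∈ K := hSK (hTS hsT)
      have hzs' : ‖z - s‖ ≤ ε / 4 := by
        rw [← dist_eq_norm]; exact Metric.mem_closedBall.1 hzs
      refine Set.mem_preimage.2 (Set.mem_univ_pi.2 fun i => ?_)
      have hrepr : b.repr z i = ⟪b i, z⟫ := b.repr_apply_apply z i
      by_cases hi : i = 0
      · subst hi
        rw [hrepr, hb0]
        have h1 : ⟪v, z⟫ = ⟪v, s⟫ + ⟪v, z - s⟫ := by rw [inner_sub_right]; ring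
        have h2 : |⟪v, s⟫| ≤ ε := hvK s hsK
        have h3 : |⟪v, z - s⟫| ≤ ε / 4 := by
          calc |⟪v, z - s⟫| ≤ ‖v‖ * ‖z - s‖ := abs_real_inner_le_norm v (z - s)
            _ ≤ ε / 4 := by rw [hvnorm, one_mul]; exact hzs'
        have : |⟪v, z⟫| ≤ 5 * ε / 4 := by
          rw [h1]; calc |⟪v, s⟫ + ⟪v, z - s⟫| ≤ |⟪v, s⟫| + |⟪v, z - s⟫| := abs_add_le _ _
            _ ≤ 5 * ε / 4 := by linarith
        have hd0 : d 0 = 5 * ε / 4 := by simp [hd]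
        rw [hd0]
        exact abs_le.1 this
      · have hbnorm : ‖b i‖ = 1 := b.orthonormal.1 i
        have hznorm : ‖z‖ ≤ 5 / 4 := by
          have h1 : ‖s‖ ≤ 1 := by simpa using mem_closedBall_iff_norm.1 (hKball hsK)
          calc ‖z‖ = ‖s + (z - s)‖ := by rw [add_sub_cancel]
            _ ≤ ‖s‖ + ‖z - s‖ := norm_add_le _ _
            _ ≤ 5 / 4 := by linarith
        have : |b.repr z i| ≤ 5 / 4 := by
          rw [hrepr]
          calc |⟪b i, z⟫| ≤ ‖b i‖ * ‖z‖ := abs_real_inner_le_norm _ _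
            _ ≤ 5 / 4 := by rw [hbnorm, one_mul]; exact hznorm
        have hdi : d i = 5 / 4 := by simp [hd, hi]
        rw [hdi]
        exact abs_le.1 this
    have hballvol : ∀ s : EuclideanSpace ℝ (Fin n), volume (closedBall s (ε / 4))
        = ENNReal.ofReal ((ε / 4) ^ n) * c := by
      intro s
      rw [Measure.addHaar_closedBall volume s (by positivity : (0:ℝ) ≤ ε / 4)]
      congr 2
      simp [finrank_euclideanSpace_fin]
    have hsum : (T.card : ℝ≥0∞) * (ENNReal.ofReal ((ε / 4) ^ n) * c)
        ≤ ENNReal.ofReal (5 * ε / 2) * ENNReal.ofReal (5 / 2) ^ m := by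
      calc (T.card : ℝ≥0∞) * (ENNReal.ofReal ((ε / 4) ^ n) * c)
          = ∑ s ∈ T, volume (closedBall s (ε / 4)) := by
            simp only [hballvol, Finset.sum_const, nsmul_eq_mul]
        _ = volume (⋃ s ∈ T, closedBall s (ε / 4)) :=
            (measure_biUnion_finset hdisj hmeas).symm
        _ ≤ volume (⇑b.repr ⁻¹' Box) := measure_mono hsub
        _ = volume Box :=
            b.measurePreserving_repr.measure_preimage hBoxMeas.nullMeasurableSet
        _ ≤ _ := hBoxVol
    -- pass to reals
    have hRHSne : ENNReal.ofReal (5 * ε / 2) * ENNReal.ofReal (5 / 2) ^ m ≠ ⊤ := by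
      exact ENNReal.mul_ne_top ENNReal.ofReal_ne_top (by simp [ENNReal.pow_ne_top])
    have hreal : (T.card : ℝ) * ((ε / 4) ^ n * c.toReal)
        ≤ (5 * ε / 2) * (5 / 2) ^ m := by
      have := ENNReal.toReal_mono hRHSne hsum
      rw [ENNReal.toReal_mul, ENNReal.toReal_mul, ENNReal.toReal_mul, ENNReal.toReal_pow,
        ENNReal.toReal_ofReal (by positivity), ENNReal.toReal_ofReal (by positivity),
        ENNReal.toReal_ofReal (by positivity), ENNReal.toReal_natCast] at this
      linarith
    have hx : 0 < (ε / 4) ^ n * c.toReal := by positivity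
    rw [hrpow]
    rw [← le_div_iff₀ hx] at hreal
    calc (T.card : ℝ) ≤ (5 * ε / 2) * (5 / 2) ^ m / ((ε / 4) ^ n * c.toReal) := hreal
      _ = C * (ε / ε ^ n) := by
          rw [hCdef]
          rw [div_pow ε 4 n]
          field_simp
          ring
  -- finiteness
  have hfin : S.Finite := by
    by_contra hinf
    have hinf' : S.Infinite := hinf
    obtain ⟨t, htS, htfin, htcard⟩ :=
      hinf'.exists_subset_ncard_eq
        (⌈C * ε ^ ((1 : ℝ) - n)⌉₊ + 1)
    have hT := key htfin.toFinset (by simpa using htS)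
    rw [Set.ncard_eq_toFinset_card t htfin] at htcard
    rw [htcard] at hT
    rw [Nat.cast_add, Nat.cast_one] at hT
    have := Nat.le_ceil (C * ε ^ ((1 : ℝ) - n))
    linarith
  refine ⟨hfin, ?_⟩
  have := key hfin.toFinset (by simp)
  rwa [Set.ncard_eq_toFinset_card S hfin]
end
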